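/- Let {Mᵢ}_{i=1,…,d²} be d×d matrices with {|Mᵢ⟩⟩}ᵢ an orthonormal basis of ℂ^d ⊗ ℂ^d, each Mᵢ invertible, and pairwise non-proportional. Then the triple-product closure condition — for all i,j,k there exists l with Mᵢ Mⱼ⁻¹ M_k ∝ M_l — holds if and only if for every j the family {Mⱼ⁻¹ Mᵢ}_{i=1,…,d²} (suitably normalized) is a nice error basis. -/

import Mathlib

open Matrix

noncomputable section

/-- A family of unitary matrices that is linearly independent: a unitary error basis. -/
def IsUnitaryErrorBasis {d n : ℕ} (U : Fin n → Matrix (Fin d) (Fin d) ℂ) : Prop :=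
  (∀ i, (U i)ᴴ * U i = 1) ∧ LinearIndependent ℂ U

/-- A nice error basis: a unitary error basis closed under multiplication up to unit phases. -/
def IsNiceErrorBasis {d n : ℕ} (U : Fin n → Matrix (Fin d) (Fin d) ℂ) : Prop :=
  IsUnitaryErrorBasis U ∧
    ∀ i j, ∃ (c : ℂ) (k : Fin n), ‖c‖ = 1 ∧ U i * U j = c • U k


lemma col_orth {d : ℕ} (M : Fin (d ^ 2) → Matrix (Fin d) (Fin d) ℂ)
    (horth : ∀ i j, ((M i)ᴴ * M j).trace = if i = j then 1 else 0)
    (a b p q : Fin d) :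
    ∑ i, (starRingEnd ℂ) (M i a p) * M i b q = if a = b ∧ p = q then 1 else 0 := by
  classical
  let e : Fin (d ^ 2) ≃ Fin d × Fin d :=
    (finCongr (pow_two d)).trans finProdFinEquiv.symm
  set V : Matrix (Fin (d ^ 2)) (Fin (d ^ 2)) ℂ :=
    fun i m => M i (e m).1 (e m).2 with hV
  have hVV : V * Vᴴ = 1 := by
    ext i k
    have : (V * Vᴴ) i k = ∑ m, M i (e m).1 (e m).2 * (starRingEnd ℂ) (M k (e m).1 (e m).2) := by
      rw [mul_apply]; rfl
    rw [this, Equiv.sum_comp e (fun x : Fin d × Fin d => M i x.1 x.2 * (starRingEnd ℂ) (M k x.1 x.2))]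
    · have h2 := horth k i
      have : ((M k)ᴴ * M i).trace = ∑ x : Fin d × Fin d, M i x.1 x.2 * (starRingEnd ℂ) (M k x.1 x.2) := by
        rw [Matrix.trace, Fintype.sum_prod_type]
        simp [Matrix.diag, mul_apply, conjTranspose_apply, mul_comm]
        rw [Finset.sum_comm]
      rw [← this, h2]
      simp [Matrix.one_apply, eq_comm]
  have hcol : Vᴴ * V = 1 := mul_eq_one_comm.mp hVV
  have h := congrFun (congrFun hcol (e.symm (a, p))) (e.symm (b, q))
  simp only [mul_apply, conjTranspose_apply, hV, Equiv.apply_symm_apply, Matrix.one_apply,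
    EmbeddingLike.apply_eq_iff_eq, Prod.mk.injEq] at h
  rw [← h]
  refine (Finset.sum_congr rfl fun i _ => ?_).trans (Matrix.mul_apply).symm
  show _ = star (M i (e (e.symm (a, p))).1 (e (e.symm (a, p))).2) *
    M i (e (e.symm (b, q))).1 (e (e.symm (b, q))).2
  rw [Equiv.apply_symm_apply, Equiv.apply_symm_apply]
  rfl

lemma key_identity {d : ℕ} (M : Fin (d ^ 2) → Matrix (Fin d) (Fin d) ℂ)
    (horth : ∀ i j, ((M i)ᴴ * M j).trace = if i = j then 1 else 0)
    (X : Matrix (Fin d) (Fin d) ℂ) :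
    ∑ i, (M i)ᴴ * X * M i = X.trace • (1 : Matrix (Fin d) (Fin d) ℂ) := by
  classical
  ext p q
  have : (∑ i, (M i)ᴴ * X * M i) p q
      = ∑ i, ∑ b, ∑ a, (starRingEnd ℂ) (M i a p) * X a b * M i b q := by
    simp [Matrix.sum_apply, mul_apply, conjTranspose_apply, Finset.sum_mul]
  rw [this]
  rw [Finset.sum_comm]
  have : ∀ b, ∑ i, ∑ a, (starRingEnd ℂ) (M i a p) * X a b * M i b q
      = ∑ a, X a b * (if a = b ∧ p = q then 1 else 0) := by
    intro b
    rw [Finset.sum_comm]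
    refine Finset.sum_congr rfl fun a _ => ?_
    rw [← col_orth M horth a b p q, Finset.mul_sum]
    refine Finset.sum_congr rfl fun i _ => by ring
  simp_rw [this]
  by_cases hpq : p = q
  · subst hpq
    simp [Matrix.trace, Matrix.one_apply, Matrix.diag]
  · simp [Matrix.one_apply, hpq]

lemma unitary_of_closure {d : ℕ} (hd : 0 < d)
    (M : Fin (d ^ 2) → Matrix (Fin d) (Fin d) ℂ)
    (hinv : ∀ i, IsUnit (M i))
    (horth : ∀ i j, ((M i)ᴴ * M j).trace = if i = j then 1 else 0)
    (hnp : ∀ i j, (∃ α : ℂ, M i = α • M j) → i = j)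
    (hcl : ∀ i j k, ∃ (l : Fin (d ^ 2)) (α : ℂ), M i * (M j)⁻¹ * M k = α • M l)
    (j : Fin (d ^ 2)) :
    ∀ i, ((M j)⁻¹ * M i)ᴴ * ((M j)⁻¹ * M i) = 1 := by
  classical
  haveI : Nonempty (Fin d) := ⟨⟨0, hd⟩⟩
  have hdj : IsUnit (M j).det := (Matrix.isUnit_iff_isUnit_det _).mp (hinv j)
  set N : Fin (d ^ 2) → Matrix (Fin d) (Fin d) ℂ := fun i => (M j)⁻¹ * M i with hN
  have hMN : ∀ i, M j * N i = M i := by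
    intro i
    rw [hN, ← mul_assoc, Matrix.mul_nonsing_inv _ hdj, one_mul]
  have hNunit : ∀ i, IsUnit (N i) := by
    intro i
    rw [Matrix.isUnit_iff_isUnit_det, hN]
    simp only [Matrix.det_mul, Matrix.det_nonsing_inv]
    exact (hdj.ringInverse).mul ((Matrix.isUnit_iff_isUnit_det _).mp (hinv i))
  have hNdet : ∀ i, (N i).det ≠ 0 := by
    intro i
    exact ((Matrix.isUnit_iff_isUnit_det _).mp (hNunit i)).ne_zero
  have hNne : ∀ i, N i ≠ 0 := by
    intro i h
    have h1 := hNunit i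
    rw [h, isUnit_zero_iff] at h1
    have h2 := congrFun (congrFun h1 ⟨0, hd⟩) ⟨0, hd⟩
    simp [Matrix.one_apply] at h2
  have hassoc : ∀ i k, N i * N k = (M j)⁻¹ * (M i * (M j)⁻¹ * M k) := by
    intro i k
    show ((M j)⁻¹ * M i) * ((M j)⁻¹ * M k) = _
    simp only [mul_assoc]
  -- closure for N
  have hclose : ∀ i k, ∃ (l : Fin (d ^ 2)) (α : ℂ), α ≠ 0 ∧ N i * N k = α • N l := by
    intro i k
    obtain ⟨l, α, h⟩ := hcl i j k
    refine ⟨l, α, ?_, ?_⟩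
    · intro hα0
      subst hα0
      have h1 : N i * N k = 0 := by
        rw [hassoc, h]
        simp
      have h2 := (hNunit i).mul (hNunit k)
      rw [h1, isUnit_zero_iff] at h2
      have h3 := congrFun (congrFun h2 ⟨0, hd⟩) ⟨0, hd⟩
      simp [Matrix.one_apply] at h3
    · rw [hassoc, h, Matrix.mul_smul]
  choose L A hA0 hA using hclose
  -- injectivity of i ↦ L i k
  have hinj : ∀ k, Function.Injective (fun i => L i k) := by
    intro k i i' h
    simp only at h
    have h1 : A i' k • (N i * N k) = A i k • (N i' * N k) := by
      rw [hA i k, hA i' k, h, smul_smul, smul_smul, mul_comm]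
    have hdNk : IsUnit (N k).det := (Matrix.isUnit_iff_isUnit_det _).mp (hNunit k)
    have h2 : A i' k • N i = A i k • N i' := by
      have := congrArg (fun X => X * (N k)⁻¹) h1
      simpa [Matrix.smul_mul, mul_assoc, Matrix.mul_nonsing_inv _ hdNk] using this
    have h3 : A i' k • M i = A i k • M i' := by
      have := congrArg (fun X => M j * X) h2
      simpa [Matrix.mul_smul, hMN] using this
    refine hnp i i' ⟨(A i' k)⁻¹ * A i k, ?_⟩
    rw [← smul_smul, ← h3, smul_smul, inv_mul_cancel₀ (hA0 i' k), one_smul]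
  have hbij : ∀ k, Function.Bijective (fun i => L i k) :=
    fun k => Finite.injective_iff_bijective.mp (hinj k)
  -- determinant moduli
  set δ : Fin (d ^ 2) → ℝ := fun i => ‖(N i).det‖ with hδ
  have hδpos : ∀ i, 0 < δ i := fun i => norm_pos_iff.mpr (hNdet i)
  set r : ℝ := 2 / d with hr
  have hcoc : ∀ i k, ‖A i k‖ ^ d * δ (L i k) = δ i * δ k := by
    intro i k
    have := congrArg Matrix.det (hA i k)
    rw [Matrix.det_mul, Matrix.det_smul] at this
    have := congrArg (fun z : ℂ => ‖z‖) this
    simp only [norm_mul, norm_pow, Fintype.card_fin] at this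
    rw [hδ]
    simp only
    rw [← this]
  set w : Fin (d ^ 2) → ℝ := fun i => δ i ^ (-r) with hw
  have hwpos : ∀ i, 0 < w i := fun i => Real.rpow_pos_of_pos (hδpos i) _
  have hdr : (d : ℝ) * r = 2 := by
    rw [hr]; field_simp
  have hwkey : ∀ i k, w i * ‖A i k‖ ^ 2 = δ k ^ r * w (L i k) := by
    intro i k
    have hA2 : ‖A i k‖ ^ 2 = (‖A i k‖ ^ d) ^ r := by
      rw [← Real.rpow_natCast ‖A i k‖ d, ← Real.rpow_mul (norm_nonneg _), hdr,
        ← Real.rpow_natCast ‖A i k‖ 2]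
      norm_num
    have e1 : (‖A i k‖ ^ d) ^ r * δ (L i k) ^ r = δ i ^ r * δ k ^ r := by
      rw [← Real.mul_rpow (by positivity) (le_of_lt (hδpos _)), hcoc i k,
        Real.mul_rpow (le_of_lt (hδpos _)) (le_of_lt (hδpos _))]
    have h3 : ‖A i k‖ ^ d = δ i * δ k / δ (L i k) := by
      rw [eq_div_iff (hδpos (L i k)).ne']
      exact hcoc i k
    have h1 : (0:ℝ) < δ i ^ r := Real.rpow_pos_of_pos (hδpos i) _
    have h2 : (0:ℝ) < δ (L i k) ^ r := Real.rpow_pos_of_pos (hδpos (L i k)) _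
    rw [hw]
    simp only
    rw [hA2, h3, Real.div_rpow (by positivity) (hδpos _).le,
      Real.mul_rpow (hδpos i).le (hδpos k).le,
      Real.rpow_neg (hδpos i).le, Real.rpow_neg (hδpos (L i k)).le]
    field_simp
  haveI : Nonempty (Fin (d ^ 2)) := ⟨⟨0, by positivity⟩⟩
  -- the invariant positive matrix P
  set P : Matrix (Fin d) (Fin d) ℂ := ∑ i, ((w i : ℝ) : ℂ) • ((N i)ᴴ * N i) with hP
  have hsq : ∀ (α : ℂ) (B : Matrix (Fin d) (Fin d) ℂ),
      (α • B)ᴴ * (α • B) = ((‖α‖ ^ 2 : ℝ) : ℂ) • (Bᴴ * B) := by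
    intro α B
    rw [Matrix.conjTranspose_smul, Matrix.smul_mul, Matrix.mul_smul, smul_smul]
    congr 1
    rw [Complex.star_def, mul_comm, Complex.mul_conj, Complex.normSq_eq_norm_sq]
  have hPinv : ∀ k, (N k)ᴴ * P * N k = ((δ k ^ r : ℝ) : ℂ) • P := by
    intro k
    have step : ∀ i : Fin (d ^ 2), (N k)ᴴ * (((w i : ℝ) : ℂ) • ((N i)ᴴ * N i)) * N k
        = ((δ k ^ r : ℝ) : ℂ) • (((w (L i k) : ℝ) : ℂ) • ((N (L i k))ᴴ * N (L i k))) := by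
      intro i
      have e : (N k)ᴴ * ((N i)ᴴ * N i) * N k = (N i * N k)ᴴ * (N i * N k) := by
        simp only [Matrix.conjTranspose_mul, mul_assoc]
      rw [Matrix.mul_smul, Matrix.smul_mul, e, hA i k, hsq]
      rw [smul_smul, smul_smul]
      congr 1
      rw [← Complex.ofReal_mul, ← Complex.ofReal_mul, hwkey i k]
    calc (N k)ᴴ * P * N k = ∑ i, (N k)ᴴ * (((w i : ℝ) : ℂ) • ((N i)ᴴ * N i)) * N k := by
          rw [hP, Matrix.mul_sum, Matrix.sum_mul]
      _ = ∑ i, ((δ k ^ r : ℝ) : ℂ) • (((w (L i k) : ℝ) : ℂ) • ((N (L i k))ᴴ * N (L i k))) :=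
          Finset.sum_congr rfl fun i _ => step i
      _ = ((δ k ^ r : ℝ) : ℂ) • ∑ i, (((w (L i k) : ℝ) : ℂ) • ((N (L i k))ᴴ * N (L i k))) := by
          rw [Finset.smul_sum]
      _ = ((δ k ^ r : ℝ) : ℂ) • P := by
          congr 1
          rw [hP]
          exact Function.Bijective.sum_comp (hbij k)
            (fun l => ((w l : ℝ) : ℂ) • ((N l)ᴴ * N l))
  have hNkey : ∀ Y : Matrix (Fin d) (Fin d) ℂ, ∑ k, (N k)ᴴ * Y * N k
      = ((((M j)⁻¹)ᴴ * Y * (M j)⁻¹).trace) • (1 : Matrix (Fin d) (Fin d) ℂ) := by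
    intro Y
    have e : ∀ k, (N k)ᴴ * Y * N k = (M k)ᴴ * (((M j)⁻¹)ᴴ * Y * (M j)⁻¹) * M k := by
      intro k
      rw [hN]
      simp only [Matrix.conjTranspose_mul, mul_assoc]
    simp_rw [e]
    exact key_identity M horth _
  set T : ℝ := ∑ k, δ k ^ r with hT
  have hTpos : 0 < T :=
    Finset.sum_pos (fun k _ => Real.rpow_pos_of_pos (hδpos k) _) Finset.univ_nonempty
  have hT0 : ((T : ℝ) : ℂ) ≠ 0 := Complex.ofReal_ne_zero.mpr hTpos.ne'
  have hPscal : ∃ p : ℂ, P = p • (1 : Matrix (Fin d) (Fin d) ℂ) := by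
    have h1 : ∑ k, (N k)ᴴ * P * N k = ((T : ℝ) : ℂ) • P := by
      simp_rw [hPinv]
      rw [← Finset.sum_smul, hT]
      push_cast
      rfl
    have h2 := hNkey P
    rw [h1] at h2
    refine ⟨((T : ℝ) : ℂ)⁻¹ * (((M j)⁻¹)ᴴ * P * (M j)⁻¹).trace, ?_⟩
    calc P = ((T : ℝ) : ℂ)⁻¹ • (((T : ℝ) : ℂ) • P) := by
          rw [smul_smul, inv_mul_cancel₀ hT0, one_smul]
      _ = ((T : ℝ) : ℂ)⁻¹ • ((((M j)⁻¹)ᴴ * P * (M j)⁻¹).trace • (1 : Matrix (Fin d) (Fin d) ℂ)) := by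
          rw [h2]
      _ = _ := by rw [smul_smul]
  have htrace : ∀ B : Matrix (Fin d) (Fin d) ℂ,
      (Bᴴ * B).trace = ((∑ x : Fin d × Fin d, Complex.normSq (B x.1 x.2) : ℝ) : ℂ) := by
    intro B
    push_cast
    rw [Matrix.trace]
    simp only [Matrix.diag, mul_apply, conjTranspose_apply, Fintype.sum_prod_type]
    rw [Finset.sum_comm]
    refine Finset.sum_congr rfl fun a _ => Finset.sum_congr rfl fun p _ => ?_
    rw [Complex.normSq_eq_conj_mul_self]
    rfl
  have htrP : P.trace
      = ((∑ i, w i * (∑ x : Fin d × Fin d, Complex.normSq (N i x.1 x.2)) : ℝ) : ℂ) := by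
    rw [hP, Matrix.trace_sum]
    push_cast
    refine Finset.sum_congr rfl fun i _ => ?_
    rw [Matrix.trace_smul, htrace, smul_eq_mul]
    push_cast
    ring
  have htrPpos : 0 < ∑ i, w i * (∑ x : Fin d × Fin d, Complex.normSq (N i x.1 x.2)) := by
    refine Finset.sum_pos (fun i _ => ?_) Finset.univ_nonempty
    refine mul_pos (hwpos i) ?_
    have hne : ∃ x : Fin d × Fin d, N i x.1 x.2 ≠ 0 := by
      by_contra hc
      push_neg at hc
      exact hNne i (by ext a b; simpa using hc (a, b))
    obtain ⟨x, hx⟩ := hne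
    refine Finset.sum_pos' (fun y _ => Complex.normSq_nonneg _) ⟨x, Finset.mem_univ x, ?_⟩
    exact Complex.normSq_pos.mpr hx
  obtain ⟨p, hPp⟩ := hPscal
  have hp0 : p ≠ 0 := by
    intro h0
    rw [h0, zero_smul] at hPp
    rw [hPp, Matrix.trace_zero] at htrP
    exact (Complex.ofReal_ne_zero.mpr htrPpos.ne') htrP.symm
  intro k
  have h1 : p • ((N k)ᴴ * N k) = p • (((δ k ^ r : ℝ) : ℂ) • (1 : Matrix (Fin d) (Fin d) ℂ)) := by
    have h := hPinv k
    rw [hPp, Matrix.mul_smul, mul_one, Matrix.smul_mul] at h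
    rw [h, smul_comm]
  have h2 : (N k)ᴴ * N k = ((δ k ^ r : ℝ) : ℂ) • (1 : Matrix (Fin d) (Fin d) ℂ) :=
    smul_right_injective _ hp0 h1
  have hdNk : IsUnit (N k).det := (Matrix.isUnit_iff_isUnit_det _).mp (hNunit k)
  have h3 : (N k)ᴴ = ((δ k ^ r : ℝ) : ℂ) • (N k)⁻¹ := by
    calc (N k)ᴴ = (N k)ᴴ * (N k * (N k)⁻¹) := by rw [Matrix.mul_nonsing_inv _ hdNk, mul_one]
      _ = ((N k)ᴴ * N k) * (N k)⁻¹ := (mul_assoc ((N k)ᴴ) (N k) ((N k)⁻¹)).symm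
      _ = ((δ k ^ r : ℝ) : ℂ) • (N k)⁻¹ := by rw [h2, Matrix.smul_mul, one_mul]
  have h4 : N k * (N k)ᴴ = ((δ k ^ r : ℝ) : ℂ) • (1 : Matrix (Fin d) (Fin d) ℂ) := by
    rw [h3, Matrix.mul_smul, Matrix.mul_nonsing_inv _ hdNk]
  have h5 : ((M k)ᴴ * M k).trace = ((δ k ^ r : ℝ) : ℂ) := by
    rw [← hMN k]
    have e : (M j * N k)ᴴ * (M j * N k) = (N k)ᴴ * ((M j)ᴴ * M j * N k) := by
      simp only [Matrix.conjTranspose_mul, mul_assoc]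
    rw [e, Matrix.trace_mul_comm]
    have e2 : (M j)ᴴ * M j * N k * (N k)ᴴ = ((δ k ^ r : ℝ) : ℂ) • ((M j)ᴴ * M j) := by
      rw [mul_assoc, h4, Matrix.mul_smul, mul_one]
    rw [e2, Matrix.trace_smul]
    have h7 := horth j j
    simp only [if_pos] at h7
    simp [h7]
  have h6 : ((δ k ^ r : ℝ) : ℂ) = 1 := by
    rw [← h5]
    simpa using horth k k
  show (N k)ᴴ * N k = 1
  rw [h2, h6, one_smul]

lemma smul_conj_mul {d : ℕ} (α : ℂ) (B : Matrix (Fin d) (Fin d) ℂ) :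
    (α • B)ᴴ * (α • B) = ((‖α‖ ^ 2 : ℝ) : ℂ) • (Bᴴ * B) := by
  rw [Matrix.conjTranspose_smul, Matrix.smul_mul, Matrix.mul_smul, smul_smul]
  congr 1
  rw [Complex.star_def, mul_comm, Complex.mul_conj, Complex.normSq_eq_norm_sq]

lemma lin_indep_M {d : ℕ} (M : Fin (d ^ 2) → Matrix (Fin d) (Fin d) ℂ)
    (horth : ∀ i j, ((M i)ᴴ * M j).trace = if i = j then 1 else 0) :
    LinearIndependent ℂ M := by
  rw [Fintype.linearIndependent_iff]
  intro g hg k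
  have h := congrArg (fun A => ((M k)ᴴ * A).trace) hg
  simp only [Matrix.mul_sum, Matrix.mul_smul, Matrix.trace_sum, Matrix.trace_smul, horth,
    Matrix.mul_zero, Matrix.trace_zero, smul_eq_mul, mul_ite, mul_one, mul_zero] at h
  rw [Finset.sum_ite_eq] at h
  simpa using h

/-- Let `{|Mᵢ⟩⟩}` be an orthonormal basis of `ℂ^d ⊗ ℂ^d` with each `Mᵢ` invertible and the
`Mᵢ` pairwise non-proportional. The triple-product closure condition
(for all `i,j,k` there is `l` with `Mᵢ Mⱼ⁻¹ M_k ∝ M_l`) holds if and only if for every `j`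
the family `{Mⱼ⁻¹ Mᵢ}ᵢ` is a nice error basis. -/
theorem triple_product_closure_iff_nice {d : ℕ} (hd : 0 < d)
    (M : Fin (d ^ 2) → Matrix (Fin d) (Fin d) ℂ)
    (hinv : ∀ i, IsUnit (M i))
    (horth : ∀ i j, ((M i)ᴴ * M j).trace = if i = j then 1 else 0)
    (hnp : ∀ i j, (∃ α : ℂ, M i = α • M j) → i = j) :
    (∀ i j k, ∃ (l : Fin (d ^ 2)) (α : ℂ), M i * (M j)⁻¹ * M k = α • M l) ↔
      (∀ j, IsNiceErrorBasis (fun i => (M j)⁻¹ * M i)) := by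
  constructor
  · -- forward direction
    intro hcl j
    have hdj : IsUnit (M j).det := (Matrix.isUnit_iff_isUnit_det _).mp (hinv j)
    have hu : ∀ i, ((M j)⁻¹ * M i)ᴴ * ((M j)⁻¹ * M i) = 1 :=
      unitary_of_closure hd M hinv horth hnp hcl j
    have hassoc : ∀ i k, ((M j)⁻¹ * M i) * ((M j)⁻¹ * M k)
        = (M j)⁻¹ * (M i * (M j)⁻¹ * M k) := by
      intro i k
      simp only [mul_assoc]
    refine ⟨⟨hu, ?_⟩, ?_⟩
    · -- linear independence
      rw [Fintype.linearIndependent_iff]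
      intro g hg k
      have hM' : ∑ i, g i • M i = 0 := by
        calc ∑ i, g i • M i = M j * ∑ i, g i • ((M j)⁻¹ * M i) := by
              rw [Finset.mul_sum]
              refine Finset.sum_congr rfl fun i _ => ?_
              rw [Matrix.mul_smul, ← mul_assoc, Matrix.mul_nonsing_inv _ hdj, one_mul]
          _ = 0 := by rw [hg, mul_zero]
      exact (Fintype.linearIndependent_iff.mp (lin_indep_M M horth)) g hM' k
    · -- closure with unit phases
      intro i k
      obtain ⟨l, α, h⟩ := hcl i j k
      have heq : ((M j)⁻¹ * M i) * ((M j)⁻¹ * M k) = α • ((M j)⁻¹ * M l) := by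
        rw [hassoc, h, Matrix.mul_smul]
      have u1 : (((M j)⁻¹ * M i) * ((M j)⁻¹ * M k))ᴴ * (((M j)⁻¹ * M i) * ((M j)⁻¹ * M k))
          = 1 := by
        calc (((M j)⁻¹ * M i) * ((M j)⁻¹ * M k))ᴴ * (((M j)⁻¹ * M i) * ((M j)⁻¹ * M k))
            = ((M j)⁻¹ * M k)ᴴ * ((((M j)⁻¹ * M i)ᴴ * ((M j)⁻¹ * M i)) * ((M j)⁻¹ * M k)) := by
              simp only [Matrix.conjTranspose_mul, mul_assoc]
          _ = 1 := by rw [hu i, one_mul, hu k]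
      rw [heq, smul_conj_mul, hu l] at u1
      have u2 := congrFun (congrFun u1 ⟨0, hd⟩) ⟨0, hd⟩
      simp only [Matrix.smul_apply, Matrix.one_apply_eq, smul_eq_mul, mul_one] at u2
      have u3 : ‖α‖ ^ 2 = 1 := by exact_mod_cast u2
      have u4 : ‖α‖ = 1 := by nlinarith [norm_nonneg α]
      exact ⟨α, l, u4, heq⟩
  · -- reverse direction
    intro hnice i j k
    obtain ⟨c, l, hc, hmul⟩ := (hnice j).2 i k
    refine ⟨l, c, ?_⟩
    have hdet : IsUnit (M j).det := (Matrix.isUnit_iff_isUnit_det _).mp (hinv j)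
    have h1 : M j * ((M j)⁻¹ * M i * ((M j)⁻¹ * M k)) = M i * (M j)⁻¹ * M k := by
      rw [← mul_assoc, ← mul_assoc, ← mul_assoc, Matrix.mul_nonsing_inv _ hdet, one_mul,
        mul_assoc]
    have h2 : M j * (c • ((M j)⁻¹ * M l)) = c • M l := by
      rw [Matrix.mul_smul, ← mul_assoc, Matrix.mul_nonsing_inv _ hdet, one_mul]
    rw [← h1]
    simp only at hmul
    rw [hmul, h2]
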